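/- Fix integers 1 ≤ r ≤ n/2 and let J_{n,r,r−1} be the 0–1 matrix indexed by r-element subsets of {1,…,n} whose (s,t) entry is 1 iff |s ∩ t| = r − 1, and let P = J_{n,r,r−1}/(r(n−r)). Then the largest eigenvalue of P is 1 (with eigenvalue r(n−r) of J), every other eigenvalue of P is at most (r(n−r) − n)/(r(n−r)), and hence the spectral gap of P is at least n/(r(n−r)) > 1/r. -/

import Mathlib

open Matrix

open Finset


abbrev SS (n r : ℕ) := {s : Finset (Fin n) // s.card = r}

lemma count_subsets (n k : ℕ) (u : Finset (Fin n)) :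
    (Finset.univ.filter (fun a : SS n k => (a : Finset (Fin n)) ⊆ u)).card
      = u.card.choose k := by
  rw [← Finset.card_powersetCard]
  refine Finset.card_bij (fun (a : SS n k) _ => (a : Finset (Fin n))) ?_ ?_ ?_
  · intro a ha
    rw [Finset.mem_filter] at ha
    rw [Finset.mem_powersetCard]
    exact ⟨ha.2, a.2⟩
  · intro a _ b _ h; exact Subtype.ext h
  · intro b hb
    rw [Finset.mem_powersetCard] at hb
    exact ⟨⟨b, hb.2⟩, by simp [hb.1], rfl⟩

lemma count_supersets (n r : ℕ) (u : Finset (Fin n)) (h : u.card ≤ r) :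
    (Finset.univ.filter (fun s : SS n r => u ⊆ (s : Finset (Fin n)))).card
      = (n - u.card).choose (r - u.card) := by
  have hcard : (Finset.univ \ u : Finset (Fin n)).card = n - u.card := by
    rw [Finset.card_sdiff_of_subset (Finset.subset_univ u), Finset.card_univ, Fintype.card_fin]
  rw [← hcard, ← Finset.card_powersetCard]
  refine Finset.card_bij (fun (s : SS n r) _ => (s : Finset (Fin n)) \ u) ?_ ?_ ?_
  · intro s hs
    rw [Finset.mem_filter] at hs
    rw [Finset.mem_powersetCard]
    constructor
    · exact Finset.sdiff_subset_sdiff (Finset.subset_univ _) le_rfl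
    · rw [Finset.card_sdiff_of_subset hs.2, s.2]
  · intro s hs t ht hst
    rw [Finset.mem_filter] at hs ht
    apply Subtype.ext
    rw [← Finset.sdiff_union_of_subset hs.2, ← Finset.sdiff_union_of_subset ht.2, hst]
  · intro w hw
    rw [Finset.mem_powersetCard] at hw
    have hdisj : Disjoint w u := by
      intro x hxw hxu y hy
      have := hw.1 (hxw hy)
      simp only [Finset.mem_sdiff] at this
      exact absurd (hxu hy) this.2
    have hcard2 : (w ∪ u).card = r := by
      rw [Finset.card_union_of_disjoint hdisj, hw.2]
      omega
    refine ⟨⟨w ∪ u, hcard2⟩, ?_, ?_⟩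
    · simp
    · simp only
      rw [Finset.union_sdiff_right, Finset.sdiff_eq_self_of_disjoint hdisj]

lemma count_supersets_zero (n r : ℕ) (u : Finset (Fin n)) (h : r < u.card) :
    (Finset.univ.filter (fun s : SS n r => u ⊆ (s : Finset (Fin n)))).card = 0 := by
  rw [Finset.card_eq_zero, Finset.filter_eq_empty_iff]
  intro s _
  intro hsub
  have := Finset.card_le_card hsub
  rw [s.2] at this
  omega

def Jm (n r : ℕ) : Matrix (SS n r) (SS n r) ℝ :=
  fun s t => if ((s : Finset (Fin n)) ∩ (t : Finset (Fin n))).card = r - 1 then 1 else 0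

def Mm (n r : ℕ) : Matrix (SS n r) (SS n (r - 1)) ℝ :=
  fun s a => if (a : Finset (Fin n)) ⊆ (s : Finset (Fin n)) then 1 else 0

lemma MMt_apply (n m : ℕ) (s t : SS n (m + 1)) :
    (Mm n (m + 1) * (Mm n (m + 1))ᵀ) s t
      = ((Finset.univ.filter (fun a : SS n m =>
          (a : Finset (Fin n)) ⊆ (s : Finset (Fin n)) ∩ (t : Finset (Fin n)))).card : ℝ) := by
  rw [Matrix.mul_apply, ← Finset.sum_boole]
  apply Finset.sum_congr rfl
  intro a _
  simp only [Mm, Matrix.transpose_apply, Finset.subset_inter_iff]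
  split_ifs with h1 h2 h3 <;> simp_all

lemma MtM_apply (n m : ℕ) (a b : SS n m) :
    ((Mm n (m + 1))ᵀ * Mm n (m + 1)) a b
      = ((Finset.univ.filter (fun s : SS n (m + 1) =>
          (a : Finset (Fin n)) ∪ (b : Finset (Fin n)) ⊆ (s : Finset (Fin n)))).card : ℝ) := by
  rw [Matrix.mul_apply, ← Finset.sum_boole]
  apply Finset.sum_congr rfl
  intro s _
  simp only [Mm, Matrix.transpose_apply, Finset.union_subset_iff]
  split_ifs with h1 h2 h3 <;> simp_all

lemma lemB (n m : ℕ) :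
    Mm n (m + 1) * (Mm n (m + 1))ᵀ = Jm n (m + 1) + ((m : ℝ) + 1) • 1 := by
  ext s t
  rw [MMt_apply, count_subsets]
  simp only [Matrix.add_apply, Matrix.smul_apply, Matrix.one_apply, Jm, smul_eq_mul]
  by_cases hst : s = t
  · subst hst
    rw [Finset.inter_self, s.2]
    have h1 : ¬ (m + 1 = m + 1 - 1) := by omega
    rw [if_neg h1, if_pos rfl]
    rw [Nat.choose_succ_self_right]
    push_cast; ring
  · have hlt : ((s : Finset (Fin n)) ∩ (t : Finset (Fin n))).card < m + 1 := by
      rcases lt_or_eq_of_le (le_trans (Finset.card_le_card Finset.inter_subset_left)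
        (le_of_eq s.2)) with h | h
      · exact h
      · exfalso
        have : (s : Finset (Fin n)) ∩ (t : Finset (Fin n)) = (s : Finset (Fin n)) := by
          apply Finset.eq_of_subset_of_card_le Finset.inter_subset_left
          rw [h, s.2]
        have hsub : (s : Finset (Fin n)) ⊆ (t : Finset (Fin n)) :=
          Finset.inter_eq_left.mp this
        exact hst (Subtype.ext (Finset.eq_of_subset_of_card_le hsub
          (by rw [s.2, t.2])))
    rw [if_neg hst, Nat.add_sub_cancel]
    by_cases hc : ((s : Finset (Fin n)) ∩ (t : Finset (Fin n))).card = m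
    · rw [if_pos hc, hc, Nat.choose_self]
      push_cast; ring
    · rw [if_neg hc, Nat.choose_eq_zero_of_lt (by omega)]
      push_cast; ring

lemma inter_card_lt {n r : ℕ} (s t : SS n r) (h : s ≠ t) :
    ((s : Finset (Fin n)) ∩ (t : Finset (Fin n))).card < r := by
  rcases lt_or_eq_of_le (le_trans (Finset.card_le_card Finset.inter_subset_left)
    (le_of_eq s.2)) with h' | h'
  · exact h'
  · exfalso
    have : (s : Finset (Fin n)) ∩ (t : Finset (Fin n)) = (s : Finset (Fin n)) := by
      apply Finset.eq_of_subset_of_card_le Finset.inter_subset_left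
      rw [h', s.2]
    have hsub : (s : Finset (Fin n)) ⊆ (t : Finset (Fin n)) :=
      Finset.inter_eq_left.mp this
    exact h (Subtype.ext (Finset.eq_of_subset_of_card_le hsub (by rw [s.2, t.2])))

-- identity C

lemma lemC (n m : ℕ) (hm : 1 ≤ m) (hn : m + 1 ≤ n) :
    (Mm n (m + 1))ᵀ * Mm n (m + 1) = Jm n m + ((n : ℝ) - (m : ℝ)) • 1 := by
  ext a b
  have ha : (a : Finset (Fin n)).card = m := a.2
  have hb : (b : Finset (Fin n)).card = m := b.2
  rw [MtM_apply]
  simp only [Matrix.add_apply, Matrix.smul_apply, Matrix.one_apply, Jm, smul_eq_mul]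
  have hco : ((a : Finset (Fin n)) ∪ (b : Finset (Fin n))).card
      + ((a : Finset (Fin n)) ∩ (b : Finset (Fin n))).card = 2 * m := by
    rw [Finset.card_union_add_card_inter, ha, hb]; ring
  by_cases hab : a = b
  · subst hab
    rw [Finset.union_self, Finset.inter_self, ha]
    rw [count_supersets n (m + 1) _ (by rw [ha]; omega)]
    rw [ha]
    have h1 : ¬ (m = m - 1) := by omega
    rw [if_neg h1, if_pos rfl]
    have h2 : (m + 1) - m = 1 := by omega
    rw [h2, Nat.choose_one_right]
    push_cast [Nat.cast_sub (by omega : m ≤ n)]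
    ring
  · have hlt : ((a : Finset (Fin n)) ∩ (b : Finset (Fin n))).card < m := by
      have := inter_card_lt a b hab
      omega
    rw [if_neg hab]
    by_cases hc : ((a : Finset (Fin n)) ∩ (b : Finset (Fin n))).card = m - 1
    · have hu : ((a : Finset (Fin n)) ∪ (b : Finset (Fin n))).card = m + 1 := by omega
      rw [count_supersets n (m + 1) _ (by omega), hu, if_pos hc]
      simp
    · have hu : m + 1 < ((a : Finset (Fin n)) ∪ (b : Finset (Fin n))).card := by omega
      rw [count_supersets_zero n (m + 1) _ hu, if_neg hc]
      push_cast; ring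

def HasEig {ι : Type} [Fintype ι] [DecidableEq ι] (A : Matrix ι ι ℝ) (μ : ℝ) : Prop :=
  ∃ v : ι → ℝ, v ≠ 0 ∧ A.mulVec v = μ • v

lemma hasEigenvalue_iff_hasEig {ι : Type} [Fintype ι] [DecidableEq ι]
    (A : Matrix ι ι ℝ) (μ : ℝ) :
    Module.End.HasEigenvalue (Matrix.toLin' A) μ ↔ HasEig A μ := by
  rw [Module.End.hasEigenvalue_iff, Submodule.ne_bot_iff]
  constructor
  · rintro ⟨v, hv, h0⟩
    refine ⟨v, h0, ?_⟩
    have := Module.End.mem_eigenspace_iff.mp hv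
    rwa [Matrix.toLin'_apply] at this
  · rintro ⟨v, h0, hv⟩
    refine ⟨v, Module.End.mem_eigenspace_iff.mpr ?_, h0⟩
    rwa [Matrix.toLin'_apply]

lemma top_bound {ι : Type} [Fintype ι] [DecidableEq ι] (A : Matrix ι ι ℝ) (R : ℝ)
    (h0 : ∀ i j, 0 ≤ A i j) (hR : ∀ i, ∑ j, A i j ≤ R) (μ : ℝ) (h : HasEig A μ) :
    μ ≤ R := by
  obtain ⟨v, hv0, hv⟩ := h
  obtain ⟨i0, hi0⟩ := Function.ne_iff.mp hv0
  obtain ⟨i, -, hi⟩ := Finset.exists_max_image Finset.univ (fun j => |v j|)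
    ⟨i0, Finset.mem_univ i0⟩
  have hipos : 0 < |v i| := lt_of_lt_of_le (abs_pos.mpr hi0) (hi i0 (Finset.mem_univ i0))
  have key : μ * |v i| ≤ R * |v i| := by
    calc μ * |v i| ≤ |μ * v i| := by
          rw [abs_mul]
          exact mul_le_mul_of_nonneg_right (le_abs_self μ) (abs_nonneg _)
      _ = |A.mulVec v i| := by rw [hv]; rfl
      _ ≤ ∑ j, |A i j * v j| := by
          rw [Matrix.mulVec, dotProduct]
          exact Finset.abs_sum_le_sum_abs _ _
      _ ≤ ∑ j, A i j * |v i| := by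
          apply Finset.sum_le_sum
          intro j _
          rw [abs_mul, abs_of_nonneg (h0 i j)]
          exact mul_le_mul_of_nonneg_left (hi j (Finset.mem_univ j)) (h0 i j)
      _ = (∑ j, A i j) * |v i| := by rw [Finset.sum_mul]
      _ ≤ R * |v i| := mul_le_mul_of_nonneg_right (hR i) (abs_nonneg _)
  exact le_of_mul_le_mul_right key hipos

lemma M_mulVec_one (n m : ℕ) :
    (Mm n (m + 1)).mulVec (fun _ => 1) = fun _ => ((m : ℝ) + 1) := by
  funext s
  have ha : (s : Finset (Fin n)).card = m + 1 := s.2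
  rw [Matrix.mulVec, dotProduct]
  simp only [Mm, mul_one]
  rw [Finset.sum_boole, count_subsets, ha, Nat.add_sub_cancel, Nat.choose_succ_self_right]
  push_cast; ring

lemma Mt_mulVec_one (n m : ℕ) (hn : m + 1 ≤ n) :
    (Mm n (m + 1))ᵀ.mulVec (fun _ => 1) = fun _ => ((n : ℝ) - (m : ℝ)) := by
  funext a
  have ha : (a : Finset (Fin n)).card = m := a.2
  rw [Matrix.mulVec, dotProduct]
  simp only [Mm, Matrix.transpose_apply, mul_one]
  rw [Finset.sum_boole, count_supersets n (m + 1) _ (by omega), ha]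
  have h2 : (m + 1) - m = 1 := by omega
  rw [h2, Nat.choose_one_right]
  push_cast [Nat.cast_sub (by omega : m ≤ n)]
  ring

lemma Jm_mulVec_one (n m : ℕ) (hn : m + 1 ≤ n) :
    (Jm n (m + 1)).mulVec (fun _ => 1)
      = fun _ => ((m : ℝ) + 1) * ((n : ℝ) - ((m : ℝ) + 1)) := by
  have hB : Jm n (m + 1) = Mm n (m + 1) * (Mm n (m + 1))ᵀ - ((m : ℝ) + 1) • 1 := by
    rw [lemB, add_sub_cancel_right]
  rw [hB, Matrix.sub_mulVec, Matrix.smul_mulVec, Matrix.one_mulVec,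
    ← Matrix.mulVec_mulVec, Mt_mulVec_one n m hn]
  have harg : (fun _ : SS n (m + 1 - 1) => ((n : ℝ) - (m : ℝ)))
      = ((n : ℝ) - (m : ℝ)) • (fun _ => (1 : ℝ)) := by
    funext x; simp
  rw [harg, Matrix.mulVec_smul, M_mulVec_one]
  funext s
  simp only [Pi.sub_apply, Pi.smul_apply, smul_eq_mul]
  ring

lemma base_case (n : ℕ) (hn : 2 ≤ n) (μ : ℝ) (h : HasEig (Jm n 1) μ)
    (hne : μ ≠ (1 : ℝ) * ((n : ℝ) - 1)) : μ ≤ (1 : ℝ) * ((n : ℝ) - 1) - n := by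
  obtain ⟨v, hv0, hv⟩ := h
  have key : ∀ s, μ * v s = (∑ t, v t) - v s := by
    intro s
    have hs := congrFun hv s
    rw [Matrix.mulVec, dotProduct] at hs
    have hrow : ∀ t : SS n 1, Jm n 1 s t * v t = v t - (if s = t then v t else 0) := by
      intro t
      unfold Jm
      by_cases hst : s = t
      · subst hst
        rw [Finset.inter_self, s.2, if_neg (by omega), if_pos rfl]
        ring
      · have := inter_card_lt s t hst
        rw [if_pos (by omega), if_neg hst]
        ring
    rw [Finset.sum_congr rfl (fun t _ => hrow t), Finset.sum_sub_distrib,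
      Finset.sum_ite_eq Finset.univ s v, if_pos (Finset.mem_univ s)] at hs
    simpa [Pi.smul_apply, smul_eq_mul] using hs.symm ▸ hs
  have hall : ∀ s, (μ + 1) * v s = ∑ t, v t := by
    intro s
    have := key s
    ring_nf
    ring_nf at this
    linarith
  by_cases hμ : μ = -1
  · subst hμ; nlinarith [hn, (by exact_mod_cast hn : (2 : ℝ) ≤ n)]
  · have hμ1 : μ + 1 ≠ 0 := fun h' => hμ (by linarith)
    exfalso
    obtain ⟨s0, hs0⟩ := Function.ne_iff.mp hv0
    set T := ∑ t, v t with hT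
    have hconst : ∀ s, v s = T / (μ + 1) := by
      intro s
      rw [eq_div_iff hμ1, mul_comm]
      exact hall s
    have hcard : Fintype.card (SS n 1) = n := by
      rw [Fintype.card_finset_len, Fintype.card_fin, Nat.choose_one_right]
    have hTn : T = (n : ℝ) * (T / (μ + 1)) := by
      conv_lhs => rw [hT]
      rw [Finset.sum_congr rfl (fun t _ => hconst t), Finset.sum_const,
        Finset.card_univ, hcard, nsmul_eq_mul]
    have hc0 : T / (μ + 1) ≠ 0 := by
      rw [← hconst s0]; exact hs0
    have : μ + 1 = (n : ℝ) := by
      have h1 := hall s0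
      rw [hconst s0] at h1
      have h2 : (μ + 1) * (T / (μ + 1)) = (n : ℝ) * (T / (μ + 1)) := by
        rw [← hTn]; exact h1
      exact mul_right_cancel₀ hc0 h2
    exact hne (by push_cast at this ⊢; linarith)

lemma johnson_le (n : ℕ) : ∀ r : ℕ, 1 ≤ r → 2 * r ≤ n → ∀ μ : ℝ, HasEig (Jm n r) μ →
    μ ≠ (r : ℝ) * ((n : ℝ) - (r : ℝ)) → μ ≤ (r : ℝ) * ((n : ℝ) - (r : ℝ)) - (n : ℝ) := by
  intro r
  induction r with
  | zero => omega
  | succ m ih =>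
    intro _ hn μ hμeig hμne
    by_cases hm : m = 0
    · subst hm
      push_cast at hμne ⊢
      exact base_case n (by omega) μ hμeig (by push_cast; simpa using hμne)
    · have hm1 : 1 ≤ m := Nat.one_le_iff_ne_zero.mpr hm
      have hmr : (1 : ℝ) ≤ (m : ℝ) := by exact_mod_cast hm1
      have hnr : 2 * ((m : ℝ) + 1) ≤ (n : ℝ) := by exact_mod_cast hn
      push_cast at hμne ⊢
      obtain ⟨v, hv0, hv⟩ := hμeig
      have h1 : (Mm n (m + 1) * (Mm n (m + 1))ᵀ).mulVec v = (μ + ((m : ℝ) + 1)) • v := by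
        rw [lemB, Matrix.add_mulVec, hv, Matrix.smul_mulVec, Matrix.one_mulVec]
        funext x
        simp only [Pi.add_apply, Pi.smul_apply, smul_eq_mul]
        ring
      by_cases h0 : μ + ((m : ℝ) + 1) = 0
      · nlinarith
      · set w := (Mm n (m + 1))ᵀ.mulVec v with hwdef
        have hw1 : (Mm n (m + 1)).mulVec w = (μ + ((m : ℝ) + 1)) • v := by
          rw [hwdef, Matrix.mulVec_mulVec, h1]
        have hwne : w ≠ 0 := by
          intro hz
          rw [hz, Matrix.mulVec_zero] at hw1
          exact hv0 ((smul_eq_zero.mp hw1.symm).resolve_left h0)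
        have h2 : ((Mm n (m + 1))ᵀ * Mm n (m + 1)).mulVec w = (μ + ((m : ℝ) + 1)) • w := by
          rw [← Matrix.mulVec_mulVec, hw1, Matrix.mulVec_smul]
        rw [lemC n m hm1 (by omega), Matrix.add_mulVec, Matrix.smul_mulVec,
          Matrix.one_mulVec] at h2
        have h3 : (Jm n m).mulVec w = (μ + ((m : ℝ) + 1) - ((n : ℝ) - (m : ℝ))) • w := by
          rw [sub_smul, ← h2]
          funext x
          simp only [Pi.add_apply, Pi.sub_apply, Pi.smul_apply, smul_eq_mul]
          ring
        have heig : HasEig (Jm n m) (μ + ((m : ℝ) + 1) - ((n : ℝ) - (m : ℝ))) :=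
          ⟨w, hwne, h3⟩
        have hlamne : μ + ((m : ℝ) + 1) - ((n : ℝ) - (m : ℝ)) ≠ (m : ℝ) * ((n : ℝ) - (m : ℝ)) := by
          intro h'
          apply hμne
          linear_combination h'
        have hres := ih hm1 (by omega) _ heig hlamne
        nlinarith [hres]

/-- For `1 ≤ r` and `2r ≤ n`, the normalized Johnson-walk matrix
`P = J_{n,r,r-1} / (r(n-r))` has largest eigenvalue `1` (coming from the eigenvalue
`r(n-r)` of `J`), every other eigenvalue of `P` is at most `(r(n-r) - n)/(r(n-r))`, and
hence the spectral gap of `P` is at least `n/(r(n-r)) > 1/r`. -/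
theorem stmt_5 (n r : ℕ) (hr : 1 ≤ r) (hn : 2 * r ≤ n)
    (J P : Matrix {s : Finset (Fin n) // s.card = r} {s : Finset (Fin n) // s.card = r} ℝ)
    (hJ : ∀ s t, J s t = if ((s : Finset (Fin n)) ∩ (t : Finset (Fin n))).card = r - 1
      then (1 : ℝ) else 0)
    (hP : P = ((r : ℝ) * ((n : ℝ) - (r : ℝ)))⁻¹ • J) :
    Module.End.HasEigenvalue (Matrix.toLin' J) ((r : ℝ) * ((n : ℝ) - (r : ℝ))) ∧
    Module.End.HasEigenvalue (Matrix.toLin' P) 1 ∧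
    (∀ μ : ℝ, Module.End.HasEigenvalue (Matrix.toLin' P) μ → μ ≤ 1) ∧
    (∀ μ : ℝ, Module.End.HasEigenvalue (Matrix.toLin' P) μ → μ ≠ 1 →
      μ ≤ ((r : ℝ) * ((n : ℝ) - (r : ℝ)) - (n : ℝ)) / ((r : ℝ) * ((n : ℝ) - (r : ℝ)))) ∧
    (n : ℝ) / ((r : ℝ) * ((n : ℝ) - (r : ℝ))) > 1 / (r : ℝ) := by
  obtain ⟨m, rfl⟩ : ∃ m, r = m + 1 := ⟨r - 1, by omega⟩
  have hJeq : J = Jm n (m + 1) := by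
    ext s t
    rw [hJ s t]
    rfl
  set c : ℝ := ((m + 1 : ℕ) : ℝ) * ((n : ℝ) - ((m + 1 : ℕ) : ℝ)) with hcdef
  have hrr : (1 : ℝ) ≤ ((m + 1 : ℕ) : ℝ) := by push_cast; linarith [Nat.cast_nonneg (α := ℝ) m]
  have hnn : 2 * ((m + 1 : ℕ) : ℝ) ≤ (n : ℝ) := by exact_mod_cast hn
  have hc : 0 < c := by rw [hcdef]; nlinarith
  have hone : (fun _ : SS n (m + 1) => (1 : ℝ)) ≠ 0 := by
    intro h
    obtain ⟨u, -, hu⟩ := Finset.exists_subset_card_eq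
      (show m + 1 ≤ (Finset.univ : Finset (Fin n)).card by
        rw [Finset.card_univ, Fintype.card_fin]; omega)
    have := congrFun h ⟨u, hu⟩
    norm_num at this
  have hJeig : HasEig (Jm n (m + 1)) c := by
    refine ⟨fun _ => 1, hone, ?_⟩
    rw [Jm_mulVec_one n m (by omega)]
    funext x
    simp only [Pi.smul_apply, smul_eq_mul, mul_one, hcdef]
    push_cast
    ring
  have hrowsum : ∀ s : SS n (m + 1), ∑ t, Jm n (m + 1) s t = c := by
    intro s
    have := congrFun (Jm_mulVec_one n m (by omega)) s
    rw [Matrix.mulVec, dotProduct] at this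
    simp only [mul_one] at this
    rw [this, hcdef]
    push_cast
    ring
  have hJP : c • P = J := by
    rw [hP, smul_smul, mul_inv_cancel₀ hc.ne', one_smul]
  have hPtoJ : ∀ μ : ℝ, HasEig P μ → HasEig (Jm n (m + 1)) (c * μ) := by
    rintro μ ⟨v, hv0, hv⟩
    refine ⟨v, hv0, ?_⟩
    rw [← hJeq, ← hJP, Matrix.smul_mulVec, hv, smul_smul]
  have htop : ∀ μ : ℝ, HasEig (Jm n (m + 1)) μ → μ ≤ c := by
    intro μ hμ
    apply top_bound (Jm n (m + 1)) c _ (fun s => le_of_eq (hrowsum s)) μ hμ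
    intro i j
    unfold Jm
    split_ifs <;> norm_num
  refine ⟨?_, ?_, ?_, ?_, ?_⟩
  · rw [hasEigenvalue_iff_hasEig, hJeq]
    exact hJeig
  · rw [hasEigenvalue_iff_hasEig]
    refine ⟨fun _ => 1, hone, ?_⟩
    rw [hP, Matrix.smul_mulVec, hJeq]
    obtain ⟨w, -, hw⟩ := hJeig
    rw [Jm_mulVec_one n m (by omega)]
    funext x
    simp only [Pi.smul_apply, smul_eq_mul, one_smul, mul_one]
    have hcc : ((m : ℝ) + 1) * ((n : ℝ) - ((m : ℝ) + 1)) = c := by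
      rw [hcdef]; push_cast; ring
    rw [hcc]
    exact inv_mul_cancel₀ hc.ne'
  · intro μ hμ
    rw [hasEigenvalue_iff_hasEig] at hμ
    have := htop (c * μ) (hPtoJ μ hμ)
    nlinarith
  · intro μ hμ hμ1
    rw [hasEigenvalue_iff_hasEig] at hμ
    have hcne : c * μ ≠ c := by
      intro h
      apply hμ1
      have : c * μ = c * 1 := by rw [h, mul_one]
      exact mul_left_cancel₀ hc.ne' this
    have hle := johnson_le n (m + 1) (by omega) hn (c * μ) (hPtoJ μ hμ) hcne
    rw [le_div_iff₀ hc]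
    nlinarith
  · rw [gt_iff_lt, div_lt_div_iff₀ (by linarith) hc]
    nlinarith
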